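/- Let d ≥ 6 be an integer. Then M_{3,d} = C^d_{3,d−3} if 6 ≤ d ≤ 9, and M_{3,d} = C^d_{3,d−2} if d ≥ 10. -/

import Mathlib

open Polynomial Finset

/-- `coefC d r i` is the coefficient of `z^r` in the degree-`d` polynomial
`c_i(z) = (z+i)(z+i-1)⋯(z+i-(d-1))`. -/
noncomputable def coefC (d r : ℕ) (i : ℤ) : ℤ :=
  (∏ j ∈ Finset.range d, (Polynomial.X + Polynomial.C (i - (j : ℤ)))).coeff r

/-- Stirling numbers of the first kind: `stirl n k` is the coefficient of `z^k` in
`∏_{j=0}^{n-1} (z - j)`. -/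
noncomputable def stirl (n k : ℕ) : ℤ :=
  (∏ j ∈ Finset.range n, (Polynomial.X - Polynomial.C (j : ℤ))).coeff k

/-- `Mrd d r = min { C^d_{r,i} : 1 ≤ i ≤ d-2 }`. -/
noncomputable def Mrd (d r : ℕ) : ℤ :=
  sInf {x : ℤ | ∃ i : ℕ, 1 ≤ i ∧ i ≤ d - 2 ∧ x = coefC d r (i : ℤ)}

/-- `Nrd d r = min { C^d_{r,i} : ⌈(d-1)/2⌉ ≤ i ≤ d-2 }`; note `⌈(d-1)/2⌉ = (d-1+1)/2`
in natural-number arithmetic. -/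
noncomputable def Nrd (d r : ℕ) : ℤ :=
  sInf {x : ℤ | ∃ i : ℕ, (d - 1 + 1) / 2 ≤ i ∧ i ≤ d - 2 ∧ x = coefC d r (i : ℤ)}

/-! ### Integer sequences: coefficients of the rising factorial `∏_{t=1}^n (z+t)` -/

def ff0 : ℕ → ℤ
  | 0 => 1
  | n+1 => (n+1 : ℤ) * ff0 n
def ff1 : ℕ → ℤ
  | 0 => 0
  | n+1 => ff0 n + (n+1 : ℤ) * ff1 n
def ff2 : ℕ → ℤ
  | 0 => 0
  | n+1 => ff1 n + (n+1 : ℤ) * ff2 n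

def Wb (a b : ℕ) : ℤ := ff0 a * ff2 b - ff1 a * ff1 b + ff2 a * ff0 b
def Uu (a b : ℕ) : ℤ := ff1 a * ff0 b - ff0 a * ff1 b
def Tt (n : ℕ) : ℤ := ff2 n - ff1 n

noncomputable def Fa (a : ℕ) : Polynomial ℤ := ∏ t ∈ range a, (X + C ((t : ℤ) + 1))
noncomputable def Ga (b : ℕ) : Polynomial ℤ := ∏ t ∈ range b, (X - C ((t : ℤ) + 1))

lemma Fa_coeffs (a : ℕ) :
    (Fa a).coeff 0 = ff0 a ∧ (Fa a).coeff 1 = ff1 a ∧ (Fa a).coeff 2 = ff2 a := by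
  induction a with
  | zero => simp [Fa, ff0, ff1, ff2, coeff_one]
  | succ n ih =>
    obtain ⟨h0, h1, h2⟩ := ih
    rw [Fa, prod_range_succ, ← Fa, mul_add]
    refine ⟨?_, ?_, ?_⟩
    · simp [coeff_mul_C, h0, ff0]; ring
    · rw [show (1:ℕ) = 0 + 1 from rfl, coeff_add, coeff_mul_X, coeff_mul_C, h0, h1, ff1]; ring
    · rw [show (2:ℕ) = 1 + 1 from rfl, coeff_add, coeff_mul_X, coeff_mul_C, h1, h2, ff2]; ring

lemma Ga_coeffs (b : ℕ) :
    (Ga b).coeff 0 = (-1)^b * ff0 b ∧ (Ga b).coeff 1 = -(-1)^b * ff1 b ∧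
      (Ga b).coeff 2 = (-1)^b * ff2 b := by
  induction b with
  | zero => simp [Ga, ff0, ff1, ff2, coeff_one]
  | succ n ih =>
    obtain ⟨h0, h1, h2⟩ := ih
    rw [Ga, prod_range_succ, ← Ga, sub_eq_add_neg, ← C_neg, mul_add]
    refine ⟨?_, ?_, ?_⟩
    · simp [coeff_mul_C, h0, ff0, pow_succ]; ring
    · rw [show (1:ℕ) = 0 + 1 from rfl, coeff_add, coeff_mul_X, coeff_mul_C, h0, h1, ff1,
        pow_succ]; ring
    · rw [show (2:ℕ) = 1 + 1 from rfl, coeff_add, coeff_mul_X, coeff_mul_C, h1, h2, ff2,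
        pow_succ]; ring

lemma prod_split (a b : ℕ) :
    ∏ j ∈ range (a+1+b), (X + C ((a:ℤ) - (j:ℤ))) = (Fa a * X) * Ga b := by
  rw [Finset.prod_range_add]
  congr 1
  · have h1 : ∀ j ∈ range (a+1), (X + C ((a:ℤ) - (j:ℤ)))
        = (fun k : ℕ => X + C ((k:ℤ))) (a + 1 - 1 - j) := by
      intro j hj
      simp only [mem_range] at hj
      simp only []
      congr 1
      congr 1
      omega
    rw [Finset.prod_congr rfl h1, Finset.prod_range_reflect (fun k : ℕ => X + C ((k:ℤ))) (a+1),
      Finset.prod_range_succ']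
    simp [Fa]
  · apply Finset.prod_congr rfl
    intro j hj
    have h2 : (a:ℤ) - ((a+1+j:ℕ):ℤ) = -((j:ℤ)+1) := by push_cast; ring
    rw [h2, C_neg, ← sub_eq_add_neg]

lemma coefC_bridge (a b : ℕ) : coefC (a+1+b) 3 (a : ℤ) = (-1)^b * Wb a b := by
  unfold coefC
  rw [prod_split, show Fa a * X * Ga b = Fa a * Ga b * X by ring,
    show (3:ℕ) = 2 + 1 from rfl, coeff_mul_X, coeff_mul,
    show Finset.HasAntidiagonal.antidiagonal (2:ℕ) = {(0,2),(1,1),(2,0)} from rfl,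
    Finset.sum_insert (by decide), Finset.sum_insert (by decide), Finset.sum_singleton]
  obtain ⟨hf0, hf1, hf2⟩ := Fa_coeffs a
  obtain ⟨hg0, hg1, hg2⟩ := Ga_coeffs b
  simp only []
  rw [hf0, hf1, hf2, hg0, hg1, hg2, Wb]
  ring

lemma coefC_eq' (d i : ℕ) (hd : i + 1 ≤ d) :
    coefC d 3 (i:ℤ) = (-1)^(d-1-i) * Wb i (d-1-i) := by
  obtain ⟨b, rfl⟩ : ∃ b, d = i + 1 + b := ⟨d - 1 - i, by omega⟩
  have h : i + 1 + b - 1 - i = b := by omega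
  rw [h]
  exact coefC_bridge i b

/-! ### Arithmetic lemmas -/

lemma ff0_pos (n : ℕ) : 0 < ff0 n := by
  induction n with
  | zero => norm_num [ff0]
  | succ m ih => rw [ff0]; positivity

lemma ff1_nonneg (n : ℕ) : 0 ≤ ff1 n := by
  induction n with
  | zero => norm_num [ff1]
  | succ m ih => rw [ff1]; have := ff0_pos m; positivity

lemma ff2_nonneg (n : ℕ) : 0 ≤ ff2 n := by
  induction n with
  | zero => norm_num [ff2]
  | succ m ih => rw [ff2]; have := ff1_nonneg m; positivity

lemma ff1_ge_ff0 (n : ℕ) (hn : 1 ≤ n) : ff0 n ≤ ff1 n := by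
  induction n with
  | zero => omega
  | succ m ih =>
    rcases Nat.eq_zero_or_pos m with rfl | hm
    · norm_num [ff0, ff1]
    · have h := ih hm
      have h0 := ff0_pos m
      rw [ff0, ff1]
      have hc : (0:ℤ) ≤ (m+1 : ℤ) := by positivity
      nlinarith

lemma Uu_one (m : ℕ) : Uu m 1 = ff1 m - ff0 m := by
  simp [Uu, ff0, ff1]

lemma Uu_succ_left (x y : ℕ) : Uu (x+1) y = (x+1 : ℤ) * Uu x y + ff0 x * ff0 y := by
  simp only [Uu, ff0, ff1]; ring

lemma Uu_succ_right (x y : ℕ) : Uu x (y+1) = (y+1 : ℤ) * Uu x y - ff0 x * ff0 y := by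
  simp only [Uu, ff0, ff1]; ring

lemma Uu_nonneg (k y : ℕ) : 0 ≤ Uu (y+k) y := by
  induction k with
  | zero => simp [Uu]; ring_nf; exact le_refl _
  | succ m ih =>
    rw [show y + (m+1) = (y+m) + 1 from rfl, Uu_succ_left]
    have h1 := ff0_pos (y+m)
    have h2 := ff0_pos y
    positivity

lemma Uu_nonneg' (x y : ℕ) (h : y ≤ x) : 0 ≤ Uu x y := by
  obtain ⟨k, rfl⟩ := Nat.exists_eq_add_of_le h
  exact Uu_nonneg k y

lemma Uu_step (x y : ℕ) (h : y ≤ x) : Uu (x+1) (y+2) ≤ Uu (x+2) (y+1) := by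
  have hA : 0 ≤ Uu (x+1) (y+1) := Uu_nonneg' _ _ (by omega)
  have hF : 0 < ff0 (x+1) * ff0 (y+1) := mul_pos (ff0_pos _) (ff0_pos _)
  have e1 : Uu (x+1) (y+2) = ((y:ℤ)+2) * Uu (x+1) (y+1) - ff0 (x+1) * ff0 (y+1) := by
    rw [show y+2 = (y+1)+1 from rfl, Uu_succ_right]; push_cast; ring
  have e2 : Uu (x+2) (y+1) = ((x:ℤ)+2) * Uu (x+1) (y+1) + ff0 (x+1) * ff0 (y+1) := by
    rw [show x+2 = (x+1)+1 from rfl, Uu_succ_left]; push_cast; ring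
  have hxy : ((y:ℤ)+2) ≤ ((x:ℤ)+2) := by omega
  rw [e1, e2]
  nlinarith

lemma Uu_le_chain : ∀ y x : ℕ, y ≤ x → Uu (x+1) (y+1) ≤ Uu (x+y+1) 1 := by
  intro y
  induction y with
  | zero => intro x _; simp
  | succ m ih =>
    intro x hx
    have h1 : Uu (x+1) (m+2) ≤ Uu (x+2) (m+1) := Uu_step x m (by omega)
    have h2 : Uu ((x+1)+1) (m+1) ≤ Uu ((x+1)+m+1) 1 := ih (x+1) (by omega)
    calc Uu (x+1) (m+1+1) ≤ Uu (x+2) (m+1) := h1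
      _ ≤ Uu (x+1+m+1) 1 := h2
      _ = Uu (x+(m+1)+1) 1 := by ring_nf

lemma ffd_mono (m : ℕ) : ff1 m - ff0 m ≤ ff1 (m+1) - ff0 (m+1) := by
  rcases Nat.eq_zero_or_pos m with rfl | hm
  · norm_num [ff0, ff1]
  · have h := ff1_ge_ff0 m hm
    have h0 := ff0_pos m
    rw [ff0, ff1]
    have hc : (1:ℤ) ≤ (m:ℤ)+1 := by omega
    nlinarith

lemma absUu_bound (x y n : ℕ) (hx : 1 ≤ x) (hy : 1 ≤ y) (hn : x + y = n + 1) :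
    |Uu x y| ≤ ff1 n - ff0 n := by
  have key : ∀ u v : ℕ, 1 ≤ u → 1 ≤ v → v ≤ u → u + v = n + 1 → Uu u v ≤ ff1 n - ff0 n := by
    intro u v hu hv huv hsum
    obtain ⟨u', rfl⟩ := Nat.exists_eq_add_of_le hu
    obtain ⟨v', rfl⟩ := Nat.exists_eq_add_of_le hv
    have h1 : Uu (u'+1) (v'+1) ≤ Uu (u'+v'+1) 1 := Uu_le_chain v' u' (by omega)
    have h2 : u' + v' + 1 = n := by omega
    rw [h2] at h1
    rw [show 1 + u' = u' + 1 by ring, show 1 + v' = v' + 1 by ring]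
    rw [Uu_one] at h1
    exact h1
  rcases le_total y x with hyx | hxy
  · have h := key x y hx hy hyx hn
    have h0 := Uu_nonneg' x y hyx
    rw [abs_of_nonneg h0]; exact h
  · have h := key y x hy hx hxy (by omega)
    have h0 := Uu_nonneg' y x hxy
    have hneg : Uu x y = -Uu y x := by simp only [Uu]; ring
    rw [hneg, abs_neg, abs_of_nonneg h0]; exact h

lemma Wb_comm (a b : ℕ) : Wb a b = Wb b a := by simp only [Wb]; ring

lemma Wb_succ_left (x y : ℕ) : Wb (x+1) y = (x+1 : ℤ) * Wb x y + Uu x y := by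
  simp only [Wb, Uu, ff0, ff1, ff2]; ring

lemma Tt_succ (n : ℕ) : Tt (n+1) = (n+1 : ℤ) * Tt n + (ff1 n - ff0 n) := by
  simp only [Tt, ff0, ff1, ff2]; ring

lemma Tt_nonneg : ∀ n : ℕ, 8 ≤ n → 0 ≤ Tt n := by
  intro n hn
  induction n, hn using Nat.le_induction with
  | base => decide
  | succ m hm ih =>
    rw [Tt_succ]
    have h2 := ff1_ge_ff0 m (by omega)
    have h0 := ff0_pos m
    have hc : (0:ℤ) ≤ (m:ℤ) + 1 := by positivity
    nlinarith

lemma main_bound : ∀ n : ℕ, 8 ≤ n → ∀ a b : ℕ, 1 ≤ a → 1 ≤ b → a + b = n + 1 →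
    |Wb a b| ≤ Tt n := by
  intro n hn
  induction n, hn using Nat.le_induction with
  | base =>
    intro a b ha hb hab
    have ha8 : a ≤ 8 := by omega
    have hb' : b = 9 - a := by omega
    subst hb'
    interval_cases a <;> decide
  | succ n hn ih =>
    have step : ∀ a b : ℕ, 2 ≤ a → 1 ≤ b → a + b = n + 2 → |Wb a b| ≤ Tt (n+1) := by
      intro a b ha hb hab
      obtain ⟨x, rfl⟩ : ∃ x, a = x + 1 := ⟨a - 1, by omega⟩
      have hx1 : 1 ≤ x := by omega
      have hW : |Wb x b| ≤ Tt n := ih x b hx1 hb (by omega)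
      have hU : |Uu x b| ≤ ff1 n - ff0 n := absUu_bound x b n hx1 hb (by omega)
      have hT0 : 0 ≤ Tt n := Tt_nonneg n hn
      rw [Wb_succ_left, Tt_succ]
      have h1 : |(x+1 : ℤ) * Wb x b + Uu x b| ≤ (x+1 : ℤ) * |Wb x b| + |Uu x b| := by
        calc |(x+1 : ℤ) * Wb x b + Uu x b| ≤ |(x+1 : ℤ) * Wb x b| + |Uu x b| := abs_add_le _ _
          _ = (x+1 : ℤ) * |Wb x b| + |Uu x b| := by
              rw [abs_mul, abs_of_nonneg (by positivity : (0:ℤ) ≤ (x:ℤ)+1)]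
      have hxn : (x:ℤ) + 1 ≤ (n:ℤ) + 1 := by omega
      nlinarith [abs_nonneg (Wb x b)]
    intro a b ha hb hab
    rcases Nat.lt_or_ge a 2 with ha2 | ha2
    · have hae : a = 1 := by omega
      subst hae
      rw [Wb_comm]
      exact step b 1 (by omega) (by omega) (by omega)
    · exact step a b ha2 hb hab

lemma Wb_one (m : ℕ) : Wb m 1 = Tt m := by
  simp only [Wb, Tt, ff0, ff1, ff2]; ring

theorem stmt_4 (d : ℕ) (hd : 6 ≤ d) :
    Mrd d 3 = if d ≤ 9 then coefC d 3 ((d : ℤ) - 3) else coefC d 3 ((d : ℤ) - 2) := by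
  unfold Mrd
  split_ifs with h9
  · -- 6 ≤ d ≤ 9 : minimum at i = d - 3
    have hc : ((d:ℤ) - 3) = ((d - 3 : ℕ) : ℤ) := by omega
    rw [hc]
    have hmem : coefC d 3 ((d - 3 : ℕ) : ℤ) ∈
        {x : ℤ | ∃ i : ℕ, 1 ≤ i ∧ i ≤ d - 2 ∧ x = coefC d 3 (i : ℤ)} :=
      ⟨d - 3, by omega, by omega, rfl⟩
    have lb : ∀ x ∈ {x : ℤ | ∃ i : ℕ, 1 ≤ i ∧ i ≤ d - 2 ∧ x = coefC d 3 (i : ℤ)},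
        coefC d 3 ((d - 3 : ℕ) : ℤ) ≤ x := by
      rintro x ⟨i, h1, h2, rfl⟩
      rw [coefC_eq' d i (by omega), coefC_eq' d (d-3) (by omega)]
      have hi2 : i ≤ d - 2 := h2
      interval_cases d <;> interval_cases i <;> decide
    exact le_antisymm (csInf_le ⟨_, lb⟩ hmem) (le_csInf ⟨_, hmem⟩ lb)
  · -- d ≥ 10 : minimum at i = d - 2
    have hd10 : 10 ≤ d := by omega
    have hc : ((d:ℤ) - 2) = ((d - 2 : ℕ) : ℤ) := by omega
    rw [hc]
    have hval : coefC d 3 ((d - 2 : ℕ) : ℤ) = -Tt (d-2) := by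
      rw [coefC_eq' d (d-2) (by omega), show d - 1 - (d-2) = 1 by omega, Wb_one]
      ring
    have hmem : coefC d 3 ((d - 2 : ℕ) : ℤ) ∈
        {x : ℤ | ∃ i : ℕ, 1 ≤ i ∧ i ≤ d - 2 ∧ x = coefC d 3 (i : ℤ)} :=
      ⟨d - 2, by omega, le_refl _, rfl⟩
    have lb : ∀ x ∈ {x : ℤ | ∃ i : ℕ, 1 ≤ i ∧ i ≤ d - 2 ∧ x = coefC d 3 (i : ℤ)},
        coefC d 3 ((d - 2 : ℕ) : ℤ) ≤ x := by
      rintro x ⟨i, h1, h2, rfl⟩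
      rw [hval, coefC_eq' d i (by omega)]
      set b := d - 1 - i with hb
      have habs : |Wb i b| ≤ Tt (d-2) :=
        main_bound (d-2) (by omega) i b h1 (by omega) (by omega)
      have h2' : |(-1 : ℤ)^b * Wb i b| = |Wb i b| := by
        rw [abs_mul, abs_pow, abs_neg, abs_one, one_pow, one_mul]
      have h3 := neg_abs_le ((-1 : ℤ)^b * Wb i b)
      rw [h2'] at h3
      linarith
    exact le_antisymm (csInf_le ⟨_, lb⟩ hmem) (le_csInf ⟨_, hmem⟩ lb)
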